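/- The evolution algebra A over ℤ/4ℤ with basis (x_i)_{i≥1} and relations x_i·x_i = 2x_i + x_{i+1}, x_i·x_j = 0 for i ≠ j, is not nilpotent: for every n ≥ 2 the left-normed product ((x_1·x_1)·x_2)·x_3 ⋯ ·x_{n-1} of the n elements x_1, x_1, x_2, …, x_{n-1} equals 2x_{n-1} + x_n, which is nonzero. Hence there is no n with A^n = (0). -/

import Mathlib

/-!
The evolution algebra `A` over `R = ℤ/4ℤ` with basis `(x_i)_{i ≥ 1}` indexed by
`ℕ+` (underlying module `ℕ+ →₀ ZMod 4`, `x_i = Finsupp.single i 1`) and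
relations `x_i · x_i = 2x_i + x_{i+1}`, `x_i · x_j = 0` for `i ≠ j`;
concretely `(a · b) = ∑_i a(i) * b(i) • (2 • x_i + x_{i+1})`.
-/
noncomputable def evolMul {R : Type*} [CommRing R] {ι : Type*}
    (Csq : ι → ι →₀ R) (a b : ι →₀ R) : ι →₀ R :=
  a.sum fun i ai => (ai * b i) • Csq i

/-- The squares of the basis elements: `x_i · x_i = 2 • x_i + x_{i+1}`. -/
noncomputable def sqZ4 : ℕ+ → (ℕ+ →₀ ZMod 4) := fun i =>
  (2 : ZMod 4) • Finsupp.single i 1 + Finsupp.single (i + 1) 1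

/-- Left-normed products: `lnp mul f m = ((f 0 · f 1) · f 2) ⋯ · f m`
is the left-normed product of the `m + 1` elements `f 0, …, f m`. -/
def lnp {A : Type*} (mul : A → A → A) (f : ℕ → A) : ℕ → A
  | 0 => f 0
  | m + 1 => mul (lnp mul f m) (f (m + 1))

lemma mul_single_self (i : ℕ+) :
    evolMul sqZ4 (Finsupp.single i 1) (Finsupp.single i 1) = sqZ4 i := by
  unfold evolMul
  rw [Finsupp.sum_single_index (by simp)]
  simp

lemma mul_sq_single (k : ℕ+) :
    evolMul sqZ4 (sqZ4 k) (Finsupp.single (k + 1) 1) = sqZ4 (k + 1) := by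
  unfold evolMul sqZ4
  rw [Finsupp.smul_single', Finsupp.sum_add_index' (by simp) (by intros; rw [add_mul, add_smul])]
  rw [Finsupp.sum_single_index (by simp), Finsupp.sum_single_index (by simp)]
  have hk : k ≠ k + 1 := by
    intro h; exact absurd (congrArg (PNat.val) h) (by simp)
  simp [Finsupp.single_apply, hk, hk.symm]

lemma sq_ne_zero (k : ℕ+) : sqZ4 k ≠ 0 := by
  intro h
  have := congrArg (fun g => g (k + 1)) h
  have hk : k ≠ k + 1 := by
    intro h; exact absurd (congrArg (PNat.val) h) (by simp)
  simp [sqZ4, Finsupp.single_apply, hk] at this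
  exact (by decide : (1:ZMod 4) ≠ 0) this

lemma toPNat'_succ (m : ℕ) (hm : 1 ≤ m) : (m + 1).toPNat' = m.toPNat' + 1 := by
  apply PNat.coe_injective
  simp [Nat.toPNat'_coe, PNat.add_coe]
  omega

lemma lnp_eq (m : ℕ) :
    lnp (evolMul sqZ4) (fun j : ℕ => Finsupp.single j.toPNat' (1 : ZMod 4)) (m + 1)
      = sqZ4 (m + 1).toPNat' := by
  induction m with
  | zero =>
    show evolMul sqZ4 _ _ = _
    exact mul_single_self _
  | succ k ih =>
    show evolMul sqZ4 (lnp _ _ (k + 1)) _ = _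
    rw [ih, toPNat'_succ (k + 1) (by omega)]
    exact mul_sq_single _

/-- The evolution algebra over `ℤ/4ℤ` with
`x_i·x_i = 2x_i + x_{i+1}` is not nilpotent: for every `n ≥ 2` the left-normed
product `((x_1·x_1)·x_2)·x_3 ⋯ ·x_{n-1}` of the `n` elements
`x_1, x_1, x_2, …, x_{n-1}` (here encoded by `f j = x_{max(j,1)}`, via
`Nat.toPNat'`) equals `2x_{n-1} + x_n`, which is nonzero.  Hence there is no
`n ≥ 2` with all left-normed products of `n` elements vanishing, i.e. no `n`
with `Aⁿ = (0)`. -/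
theorem example_Z4_not_nilpotent :
    (∀ n : ℕ, 2 ≤ n →
      lnp (evolMul sqZ4) (fun j : ℕ => Finsupp.single j.toPNat' (1 : ZMod 4)) (n - 1)
          = (2 : ZMod 4) • Finsupp.single (n - 1).toPNat' 1
              + Finsupp.single n.toPNat' 1 ∧
      lnp (evolMul sqZ4) (fun j : ℕ => Finsupp.single j.toPNat' (1 : ZMod 4)) (n - 1)
          ≠ 0) ∧
    ¬ (∃ n : ℕ, 2 ≤ n ∧
        ∀ f : ℕ → (ℕ+ →₀ ZMod 4), lnp (evolMul sqZ4) f (n - 1) = 0) := by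
  have key : ∀ n : ℕ, 2 ≤ n →
      lnp (evolMul sqZ4) (fun j : ℕ => Finsupp.single j.toPNat' (1 : ZMod 4)) (n - 1)
        = sqZ4 (n - 1).toPNat' := by
    intro n hn
    obtain ⟨m, rfl⟩ : ∃ m, n = m + 2 := ⟨n - 2, by omega⟩
    have : m + 2 - 1 = m + 1 := by omega
    rw [this]
    exact lnp_eq m
  constructor
  · intro n hn
    refine ⟨?_, ?_⟩
    · rw [key n hn]
      have h1 : (n - 1).toPNat' + 1 = n.toPNat' := by
        apply PNat.coe_injective
        simp [Nat.toPNat'_coe, PNat.add_coe]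
        split_ifs <;> omega
      rw [sqZ4, h1]
    · rw [key n hn]
      exact sq_ne_zero _
  · rintro ⟨n, hn, hall⟩
    have := hall (fun j : ℕ => Finsupp.single j.toPNat' (1 : ZMod 4))
    rw [key n hn] at this
    exact sq_ne_zero _ this
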